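/- arXiv:2406.19174 — 2 statements merged into one kernel-verified Lean document; each statement's English description precedes it below -/
import Mathlib

section
/- Let f : Ω × ℝⁿ → ℝ with f(x,·) ∈ C² satisfying m(1+|ξ|²)^{(p-2)/2}|λ|² ≤ ⟨f_{ξξ}(x,ξ)λ,λ⟩ for all ξ,λ. Then for all x ∈ Ω and ξ,η ∈ ℝⁿ: f(x,ξ) + f(x,η) ≥ 2f(x,(ξ+η)/2) + c|((ξ−η)/2)|²(1 + |(ξ+η)/2|² + |(ξ−η)/2|²)^{(p-2)/2}, where c > 0 depends only on m and p. -/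
open Metric Set

private lemma aux_rpow {s k a b : ℝ} (hk : 0 ≤ k) (ha : 0 < a) (h1 : a ≤ b) (h2 : b ≤ k * a) :
    min 1 (k ^ s) * a ^ s ≤ b ^ s := by
  rcases le_or_gt 0 s with hs | hs
  · calc min 1 (k ^ s) * a ^ s ≤ 1 * a ^ s :=
        mul_le_mul_of_nonneg_right (min_le_left _ _) (Real.rpow_nonneg ha.le s)
    _ = a ^ s := one_mul _
    _ ≤ b ^ s := Real.rpow_le_rpow ha.le h1 hs
  · calc min 1 (k ^ s) * a ^ s ≤ k ^ s * a ^ s :=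
        mul_le_mul_of_nonneg_right (min_le_right _ _) (Real.rpow_nonneg ha.le s)
    _ = (k * a) ^ s := (Real.mul_rpow hk ha.le).symm
    _ ≤ b ^ s := Real.rpow_le_rpow_of_nonpos (lt_of_lt_of_le ha h1) h2 hs.le

set_option maxHeartbeats 2000000 in
theorem stmt3 (n : ℕ) (p m : ℝ) (hp : 1 < p) (hm : 0 < m)
    (Ω : Set (EuclideanSpace ℝ (Fin n))) (hΩopen : IsOpen Ω)
    (f : EuclideanSpace ℝ (Fin n) → EuclideanSpace ℝ (Fin n) → ℝ)
    (hfC2 : ∀ x ∈ Ω, ContDiff ℝ 2 (f x))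
    (hH2 : ∀ x ∈ Ω, ∀ ξ lam : EuclideanSpace ℝ (Fin n),
      m * (1 + ‖ξ‖ ^ 2) ^ ((p - 2) / 2) * ‖lam‖ ^ 2 ≤ fderiv ℝ (fderiv ℝ (f x)) ξ lam lam) :
    ∃ c > 0, ∀ x ∈ Ω, ∀ ξ η : EuclideanSpace ℝ (Fin n),
      f x ξ + f x η ≥ 2 * f x (((1:ℝ)/2) • (ξ + η)) +
        c * ‖((1:ℝ)/2) • (ξ - η)‖ ^ 2 *
          (1 + ‖((1:ℝ)/2) • (ξ + η)‖ ^ 2 + ‖((1:ℝ)/2) • (ξ - η)‖ ^ 2) ^ ((p - 2) / 2) := by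
  set s : ℝ := (p - 2) / 2 with hs_def
  set A : ℝ := min 1 ((2:ℝ) ^ s) with hA_def
  set A4 : ℝ := min 1 ((4:ℝ) ^ s) with hA4_def
  have hApos : 0 < A := lt_min one_pos (Real.rpow_pos_of_pos two_pos s)
  have hA4pos : 0 < A4 := lt_min one_pos (Real.rpow_pos_of_pos (by norm_num) s)
  have h4s : (0:ℝ) < (4:ℝ) ^ (-s) := Real.rpow_pos_of_pos (by norm_num) _
  refine ⟨m * A * A4 * (4:ℝ) ^ (-s) / 16, by positivity, ?_⟩
  set c : ℝ := m * A * A4 * (4:ℝ) ^ (-s) / 16 with hc_def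
  intro x hx ξ η
  have hFC : ContDiff ℝ 2 (f x) := hfC2 x hx
  have hH2x := hH2 x hx
  set F : EuclideanSpace ℝ (Fin n) → ℝ := f x with hF_def
  set μ : EuclideanSpace ℝ (Fin n) := ((1:ℝ)/2) • (ξ + η) with hμ_def
  set ν : EuclideanSpace ℝ (Fin n) := ((1:ℝ)/2) • (ξ - η) with hν_def
  set W : ℝ := 1 + ‖μ‖ ^ 2 + ‖ν‖ ^ 2 with hW_def
  have hW1 : (1:ℝ) ≤ W := by
    rw [hW_def]; nlinarith [sq_nonneg ‖μ‖, sq_nonneg ‖ν‖]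
  have hWpos : (0:ℝ) < W := lt_of_lt_of_le one_pos hW1
  have hFd : Differentiable ℝ F := hFC.differentiable (by norm_num)
  have hF1 : ContDiff ℝ 1 (fderiv ℝ F) := hFC.fderiv_right (by norm_num)
  have hF1d : Differentiable ℝ (fderiv ℝ F) := hF1.differentiable (by norm_num)
  set γ : ℝ → EuclideanSpace ℝ (Fin n) := fun t => μ + t • ν with hγ_def
  have hγ : ∀ t : ℝ, HasDerivAt γ ν t := fun t => by
    simpa [hγ_def] using ((hasDerivAt_id t).smul_const ν).const_add μ
  set g : ℝ → ℝ := fun t => F (γ t) with hg_def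
  set G : ℝ → ℝ := fun t => (fderiv ℝ F (γ t)) ν with hG_def
  set H : ℝ → ℝ := fun t => fderiv ℝ (fderiv ℝ F) (γ t) ν ν with hH_def
  have hg : ∀ t : ℝ, HasDerivAt g (G t) t := fun t =>
    ((hFd (γ t)).hasFDerivAt).comp_hasDerivAt t (hγ t)
  have hG : ∀ t : ℝ, HasDerivAt G (H t) t := fun t => by
    have h1 : HasFDerivAt (fderiv ℝ F) (fderiv ℝ (fderiv ℝ F) (γ t)) (γ t) :=
      (hF1d (γ t)).hasFDerivAt
    have h2 := (ContinuousLinearMap.apply ℝ ℝ ν).hasFDerivAt.comp (γ t) h1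
    have h3 := h2.comp_hasDerivAt t (hγ t)
    simpa [Function.comp_def, hG_def, hH_def] using h3
  set h : ℝ → ℝ := fun t => g t + g (-t) - 2 * g 0 with hh_def
  have hh' : ∀ t : ℝ, HasDerivAt h (G t - G (-t)) t := fun t => by
    have h1 : HasDerivAt (fun t : ℝ => g (-t)) (-G (-t)) t := by
      simpa [Function.comp_def] using (hg (-t)).comp t (hasDerivAt_neg t)
    simpa [sub_eq_add_neg, hh_def] using ((hg t).add h1).sub_const (2 * g 0)
  have hh'' : ∀ t : ℝ, HasDerivAt (fun t => G t - G (-t)) (H t + H (-t)) t := fun t => by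
    have h1 : HasDerivAt (fun t : ℝ => G (-t)) (-H (-t)) t := by
      simpa [Function.comp_def] using (hG (-t)).comp t (hasDerivAt_neg t)
    simpa [sub_neg_eq_add, Pi.sub_def] using (hG t).sub h1
  have heven : ∀ t : ℝ, h (-t) = h t := fun t => by
    simp only [hh_def, neg_neg]; ring
  have hH2' : ∀ t : ℝ, m * (1 + ‖γ t‖ ^ 2) ^ s * ‖ν‖ ^ 2 ≤ H t := fun t => hH2x (γ t) ν
  have hHnn : ∀ t : ℝ, 0 ≤ H t := fun t => le_trans (by positivity) (hH2' t)
  -- key quantitative lower bound on the second derivative on [1/2, 1]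
  have hkey : ∀ t : ℝ, 1/2 ≤ t → t ≤ 1 → 16 * c * ‖ν‖ ^ 2 * W ^ s ≤ H t + H (-t) := by
    intro t ht1 ht2
    have hsq : ‖t • ν‖ ^ 2 = t ^ 2 * ‖ν‖ ^ 2 := by
      rw [norm_smul]; simp [mul_pow, sq_abs]
    have e1 : ‖γ t‖ ^ 2 = ‖μ‖ ^ 2 + 2 * (inner ℝ μ (t • ν) : ℝ) + t ^ 2 * ‖ν‖ ^ 2 := by
      rw [hγ_def]; rw [← hsq]; exact norm_add_sq_real μ (t • ν)
    have e2 : ‖γ (-t)‖ ^ 2 = ‖μ‖ ^ 2 - 2 * (inner ℝ μ (t • ν) : ℝ) + t ^ 2 * ‖ν‖ ^ 2 := by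
      have : γ (-t) = μ - t • ν := by rw [hγ_def]; simp [neg_smul, sub_eq_add_neg]
      rw [this, ← hsq]; exact norm_sub_sq_real μ (t • ν)
    set w : ℝ := 1 + ‖μ‖ ^ 2 + t ^ 2 * ‖ν‖ ^ 2 with hw_def
    have hw1 : (1:ℝ) ≤ w := by
      rw [hw_def]; nlinarith [sq_nonneg ‖μ‖, sq_nonneg t, sq_nonneg ‖ν‖, mul_nonneg (sq_nonneg t) (sq_nonneg ‖ν‖)]
    have hwpos : (0:ℝ) < w := lt_of_lt_of_le one_pos hw1
    have hu1 : (1:ℝ) ≤ 1 + ‖γ t‖ ^ 2 := by linarith [sq_nonneg ‖γ t‖]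
    have hu2 : (1:ℝ) ≤ 1 + ‖γ (-t)‖ ^ 2 := by linarith [sq_nonneg ‖γ (-t)‖]
    have hpar : (1 + ‖γ t‖ ^ 2) + (1 + ‖γ (-t)‖ ^ 2) = 2 * w := by
      rw [e1, e2, hw_def]; ring
    -- the max of the two is between w and 2w
    have hstep2 : m * (A * w ^ s) * ‖ν‖ ^ 2 ≤ H t + H (-t) := by
      rcases le_total (1 + ‖γ (-t)‖ ^ 2) (1 + ‖γ t‖ ^ 2) with hle | hle
      · have hub : 1 + ‖γ t‖ ^ 2 ≤ 2 * w := by linarith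
        have hlb : w ≤ 1 + ‖γ t‖ ^ 2 := by linarith
        have := aux_rpow (s := s) (by norm_num : (0:ℝ) ≤ 2) hwpos hlb hub
        have h5 : m * (A * w ^ s) * ‖ν‖ ^ 2 ≤ m * (1 + ‖γ t‖ ^ 2) ^ s * ‖ν‖ ^ 2 := by
          have := mul_le_mul_of_nonneg_left this hm.le
          nlinarith [sq_nonneg ‖ν‖, this]
        have h6 : (0:ℝ) ≤ H (-t) := hHnn (-t)
        linarith [hH2' t, h5]
      · have hub : 1 + ‖γ (-t)‖ ^ 2 ≤ 2 * w := by linarith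
        have hlb : w ≤ 1 + ‖γ (-t)‖ ^ 2 := by linarith
        have := aux_rpow (s := s) (by norm_num : (0:ℝ) ≤ 2) hwpos hlb hub
        have h5 : m * (A * w ^ s) * ‖ν‖ ^ 2 ≤ m * (1 + ‖γ (-t)‖ ^ 2) ^ s * ‖ν‖ ^ 2 := by
          have := mul_le_mul_of_nonneg_left this hm.le
          nlinarith [sq_nonneg ‖ν‖, this]
        have h6 : (0:ℝ) ≤ H t := hHnn t
        linarith [hH2' (-t), h5]
    -- w ^ s ≥ A4 * (W/4) ^ s
    have ht2' : (1:ℝ)/4 ≤ t ^ 2 := by nlinarith [sq_nonneg (t - 1/2)]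
    have ht2'' : t ^ 2 ≤ 1 := by nlinarith [sq_nonneg (t - 1/2)]
    have hlb2 : W / 4 ≤ w := by
      rw [hW_def, hw_def]
      nlinarith [mul_le_mul_of_nonneg_right ht2' (sq_nonneg ‖ν‖), sq_nonneg ‖μ‖]
    have hub2 : w ≤ 4 * (W / 4) := by
      rw [hW_def, hw_def]
      nlinarith [mul_le_mul_of_nonneg_right ht2'' (sq_nonneg ‖ν‖)]
    have hstep1 : A4 * (W / 4) ^ s ≤ w ^ s :=
      aux_rpow (s := s) (by norm_num : (0:ℝ) ≤ 4) (by positivity) hlb2 hub2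
    have hWQ : (W / 4 : ℝ) ^ s = W ^ s * (4:ℝ) ^ (-s) := by
      rw [Real.div_rpow hWpos.le (by norm_num), Real.rpow_neg (by norm_num), div_eq_mul_inv]
    have hchain : 16 * c * ‖ν‖ ^ 2 * W ^ s ≤ m * (A * w ^ s) * ‖ν‖ ^ 2 := by
      have h7 : A4 * (W ^ s * (4:ℝ) ^ (-s)) ≤ w ^ s := by rwa [← hWQ]
      have h8 : A * (A4 * (W ^ s * (4:ℝ) ^ (-s))) ≤ A * w ^ s :=
        mul_le_mul_of_nonneg_left h7 hApos.le
      have h9 : m * (A * (A4 * (W ^ s * (4:ℝ) ^ (-s)))) * ‖ν‖ ^ 2 ≤ m * (A * w ^ s) * ‖ν‖ ^ 2 := by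
        have := mul_le_mul_of_nonneg_left h8 hm.le
        nlinarith [sq_nonneg ‖ν‖, this]
      calc 16 * c * ‖ν‖ ^ 2 * W ^ s
          = m * (A * (A4 * (W ^ s * (4:ℝ) ^ (-s)))) * ‖ν‖ ^ 2 := by rw [hc_def]; ring
        _ ≤ m * (A * w ^ s) * ‖ν‖ ^ 2 := h9
    linarith [hstep2, hchain]
  -- convexity of h on ℝ
  have hdh : deriv h = fun t => G t - G (-t) := funext fun t => (hh' t).deriv
  have hconvh : ConvexOn ℝ univ h := by
    refine convexOn_of_deriv2_nonneg' convex_univ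
      (fun t _ => (hh' t).differentiableAt.differentiableWithinAt) ?_ ?_
    · rw [hdh]; exact fun t _ => (hh'' t).differentiableAt.differentiableWithinAt
    · intro t _
      have : deriv (deriv h) t = H t + H (-t) := by rw [hdh]; exact (hh'' t).deriv
      simp only [Function.iterate_succ, Function.iterate_zero, Function.comp_apply, id_eq]
      rw [this]
      exact add_nonneg (hHnn t) (hHnn (-t))
  -- convexity of φ on [1/2, 1]
  set D : ℝ := 8 * c * ‖ν‖ ^ 2 * W ^ s with hD_def
  have hDnn : 0 ≤ D := by
    rw [hD_def]; positivity
  set φ : ℝ → ℝ := fun t => h t - D * t ^ 2 with hφ_def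
  have hφd : ∀ t : ℝ, HasDerivAt φ (G t - G (-t) - D * (2 * t)) t := fun t =>
    (hh' t).sub (by simpa using (hasDerivAt_pow 2 t).const_mul D)
  have hφdd : ∀ t : ℝ, HasDerivAt (fun t => G t - G (-t) - D * (2 * t)) (H t + H (-t) - D * 2) t :=
    fun t => (hh'' t).sub (by simpa [mul_assoc] using (hasDerivAt_id t).const_mul (D * 2))
  have hdφ : deriv φ = fun t => G t - G (-t) - D * (2 * t) := funext fun t => (hφd t).deriv
  have hconvφ : ConvexOn ℝ (Icc (1/2 : ℝ) 1) φ := by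
    refine convexOn_of_deriv2_nonneg' (convex_Icc _ _)
      (fun t _ => (hφd t).differentiableAt.differentiableWithinAt) ?_ ?_
    · rw [hdφ]; exact fun t _ => (hφdd t).differentiableAt.differentiableWithinAt
    · intro t ht
      have hde : deriv (deriv φ) t = H t + H (-t) - D * 2 := by rw [hdφ]; exact (hφdd t).deriv
      simp only [Function.iterate_succ, Function.iterate_zero, Function.comp_apply, id_eq]
      rw [hde]
      have := hkey t ht.1 ht.2
      rw [hD_def]
      linarith
  -- midpoint consequences
  have h0 : h 0 = 0 := by simp only [hh_def, neg_zero]; ring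
  have hpos : 0 ≤ h (1/2) := by
    have := hconvh.2 (mem_univ (-(1/2) : ℝ)) (mem_univ (1/2 : ℝ))
      (by norm_num : (0:ℝ) ≤ 1/2) (by norm_num : (0:ℝ) ≤ 1/2) (by norm_num)
    rw [heven] at this
    simp only [smul_eq_mul] at this
    norm_num at this
    linarith [h0 ▸ this]
  have hmono : h (1/2) ≤ h (3/4) := by
    have := hconvh.2 (mem_univ (-(3/4) : ℝ)) (mem_univ (3/4 : ℝ))
      (by norm_num : (0:ℝ) ≤ 1/6) (by norm_num : (0:ℝ) ≤ 5/6) (by norm_num)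
    rw [heven] at this
    simp only [smul_eq_mul] at this
    norm_num at this
    linarith
  have hmid : φ (3/4) ≤ (1/2) * φ (1/2) + (1/2) * φ 1 := by
    have := hconvφ.2 (by norm_num : (1/2 : ℝ) ∈ Icc (1/2:ℝ) 1)
      (by norm_num : (1 : ℝ) ∈ Icc (1/2:ℝ) 1)
      (by norm_num : (0:ℝ) ≤ 1/2) (by norm_num : (0:ℝ) ≤ 1/2) (by norm_num)
    simp only [smul_eq_mul] at this
    norm_num at this
    convert this using 2 <;> norm_num
  have hfinal : D / 8 ≤ h 1 := by
    simp only [hφ_def] at hmid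
    nlinarith [hmid, hmono, hpos]
  -- translate back
  have e₁ : γ 1 = ξ := by rw [hγ_def, hμ_def, hν_def]; module
  have e₂ : γ (-1) = η := by rw [hγ_def, hμ_def, hν_def]; module
  have e₀ : γ 0 = μ := by rw [hγ_def]; simp
  have hh1 : h 1 = F ξ + F η - 2 * F μ := by
    simp only [hh_def, hg_def, e₁, e₂, e₀]
  rw [hh1] at hfinal
  have : D / 8 = c * ‖ν‖ ^ 2 * W ^ s := by rw [hD_def]; ring
  rw [this] at hfinal
  linarith
end

section
/- Let f_h(x,ξ) = Σ_{l=1}^{N} φ_l(x) f(x_l, ξ) where φ_l are C¹ nonnegative functions with Σ_l φ_l(x) = 1 on an open set U, |Dφ_l(x)| ≤ Ch for all l, the points x_l satisfy |x_l − x_1| ≤ c(n)/h, and f satisfies |f_ξ(x,ξ) − f_ξ(y,ξ)| ≤ K|x−y|(1+|ξ|²)^{(q-1)/2}. Then |D_x f_{h,ξ}(x,ξ)| ≤ N C c(n) K (1+|ξ|²)^{(q-1)/2} for all x ∈ U and ξ ∈ ℝⁿ, with constant independent of h. -/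
open Metric Set

set_option maxHeartbeats 1000000 in
theorem stmt13 (n N : ℕ) (hN : 0 < N) (q K C c h : ℝ) (hq : 1 < q) (hK : 0 < K)
    (hC : 0 < C) (hc : 0 < c) (hh : 0 < h)
    (Ω U : Set (EuclideanSpace ℝ (Fin n))) (hU : IsOpen U) (hUΩ : U ⊆ Ω)
    (f : EuclideanSpace ℝ (Fin n) → EuclideanSpace ℝ (Fin n) → ℝ)
    (hfC1 : ∀ x, ContDiff ℝ 1 (f x))
    (φ : Fin N → EuclideanSpace ℝ (Fin n) → ℝ)
    (pts : Fin N → EuclideanSpace ℝ (Fin n))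
    (hφC1 : ∀ l, ContDiff ℝ 1 (φ l))
    (hφnn : ∀ l x, 0 ≤ φ l x)
    (hφsum : ∀ x ∈ U, ∑ l, φ l x = 1)
    (hφgrad : ∀ l x, ‖fderiv ℝ (φ l) x‖ ≤ C * h)
    (hpts : ∀ l, ‖pts l - pts ⟨0, hN⟩‖ ≤ c / h)
    (hH4 : ∀ x y : EuclideanSpace ℝ (Fin n), ∀ ξ : EuclideanSpace ℝ (Fin n),
      ‖fderiv ℝ (f x) ξ - fderiv ℝ (f y) ξ‖ ≤ K * ‖x - y‖ * (1 + ‖ξ‖ ^ 2) ^ ((q - 1) / 2)) :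
    ∀ x ∈ U, ∀ ξ : EuclideanSpace ℝ (Fin n),
      ‖fderiv ℝ (fun z => ∑ l, φ l z • fderiv ℝ (f (pts l)) ξ) x‖
        ≤ N * C * c * K * (1 + ‖ξ‖ ^ 2) ^ ((q - 1) / 2) := by

  intro x hx ξ
  set P : ℝ := (1 + ‖ξ‖ ^ 2) ^ ((q - 1) / 2) with hPdef
  have hP : 0 ≤ P := by
    apply Real.rpow_nonneg; positivity
  set A : Fin N → (EuclideanSpace ℝ (Fin n) →L[ℝ] ℝ) := fun l => fderiv ℝ (f (pts l)) ξ with hA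
  have hdφ : ∀ l, DifferentiableAt ℝ (φ l) x :=
    fun l => ((hφC1 l).differentiable one_ne_zero).differentiableAt
  have hf1 : fderiv ℝ (fun z => ∑ l, φ l z • fderiv ℝ (f (pts l)) ξ) x
      = ∑ l, (fderiv ℝ (φ l) x).smulRight (A l) := by
    rw [fderiv_fun_sum (fun l _ => ((hdφ l).smul_const (A l)))]
    exact Finset.sum_congr rfl fun l _ => fderiv_smul_const (hdφ l) (A l)
  have hsum0 : ∑ l, fderiv ℝ (φ l) x = 0 := by
    have he : (fun z => ∑ l, φ l z) =ᶠ[nhds x] (fun _ => (1:ℝ)) := by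
      filter_upwards [hU.mem_nhds hx] with y hy using hφsum y hy
    have h1 : fderiv ℝ (fun z => ∑ l, φ l z) x = 0 := by
      rw [he.fderiv_eq]; exact fderiv_const_apply 1
    rw [← h1, fderiv_fun_sum (fun l _ => hdφ l)]
  have h0 : ∑ l, (fderiv ℝ (φ l) x).smulRight (A ⟨0, hN⟩) = 0 := by
    ext v
    simp only [ContinuousLinearMap.sum_apply, ContinuousLinearMap.smulRight_apply,
      ContinuousLinearMap.zero_apply, ContinuousLinearMap.smul_apply]
    rw [← Finset.sum_smul]
    have : ∑ l, fderiv ℝ (φ l) x v = 0 := by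
      have := congrArg (fun T => T v) hsum0
      simpa using this
    rw [this, zero_smul]
  have split : ∀ l : Fin N, (fderiv ℝ (φ l) x).smulRight (A l - A ⟨0, hN⟩)
      = (fderiv ℝ (φ l) x).smulRight (A l) - (fderiv ℝ (φ l) x).smulRight (A ⟨0, hN⟩) := by
    intro l; ext v
    simp [smul_sub]
  have key : ∑ l, (fderiv ℝ (φ l) x).smulRight (A l)
      = ∑ l, (fderiv ℝ (φ l) x).smulRight (A l - A ⟨0, hN⟩) := by
    have e1 := Finset.sum_sub_distrib (s := Finset.univ) (fun l => (fderiv ℝ (φ l) x).smulRight (A l)) (fun l => (fderiv ℝ (φ l) x).smulRight (A ⟨0, hN⟩))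
    rw [Finset.sum_congr rfl fun l _ => split l]
    erw [e1]
    rw [h0]
    exact (sub_zero (∑ l, (fderiv ℝ (φ l) x).smulRight (A l))).symm
  have hterm : ∀ l : Fin N, ‖(fderiv ℝ (φ l) x).smulRight (A l - A ⟨0, hN⟩)‖
      ≤ C * c * K * P := by
    intro l
    rw [ContinuousLinearMap.norm_smulRight_apply]
    have hAb : ‖A l - A ⟨0, hN⟩‖ ≤ K * (c / h) * P := by
      calc ‖A l - A ⟨0, hN⟩‖ ≤ K * ‖pts l - pts ⟨0, hN⟩‖ * P := hH4 _ _ ξ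
        _ ≤ K * (c / h) * P := by
            have := hpts l
            have h1 : K * ‖pts l - pts ⟨0, hN⟩‖ ≤ K * (c / h) :=
              mul_le_mul_of_nonneg_left this hK.le
            exact mul_le_mul_of_nonneg_right h1 hP
    calc ‖fderiv ℝ (φ l) x‖ * ‖A l - A ⟨0, hN⟩‖
        ≤ (C * h) * (K * (c / h) * P) :=
          mul_le_mul (hφgrad l x) hAb (norm_nonneg _) (by positivity)
      _ = C * c * K * P := by field_simp
  rw [hf1, key]
  refine (norm_sum_le (E := EuclideanSpace ℝ (Fin n) →L[ℝ] EuclideanSpace ℝ (Fin n) →L[ℝ] ℝ) _ _).trans ?_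
  refine (Finset.sum_le_sum fun l _ => hterm l).trans ?_
  apply le_of_eq
  rw [Finset.sum_const, Finset.card_univ, Fintype.card_fin, nsmul_eq_mul]
  ring
end
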